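/- Let M be a map with flag set F and generators s0, s1, s2, and let r0, r1, r2 be the truncation generators on F × {0,1,2}. If M is a k-orbit map, then the number n of orbits of Γ(Tr(M)) on F × {0,1,2} satisfies: n = k, or n = 3k, or k is even and 2n = 3k (i.e. n = 3k/2). -/
import Mathlib

open MulAction


/-- Counting for free actions: (#orbits) * |G| = |X|. -/
lemma free_action_card_orbits_mul {G X : Type*} [Group G] [MulAction G X]
    [Finite X] [Finite G]
    (hfree : ∀ (g : G) (x : X), g • x = x → g = 1) :
    Nat.card (orbitRel.Quotient G X) * Nat.card G = Nat.card X := by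
  have horb : ∀ x : X, Nonempty (orbit G x ≃ G) := by
    intro x
    refine ⟨(Equiv.ofBijective (fun g : G => (⟨g • x, mem_orbit x g⟩ : orbit G x)) ⟨?_, ?_⟩).symm⟩
    · intro g h hx
      have : g • x = h • x := congrArg Subtype.val hx
      have : (h⁻¹ * g) • x = x := by rw [mul_smul, this, inv_smul_smul]
      have := hfree _ _ this
      have := mul_eq_one_iff_inv_eq.mp this
      simpa [inv_inv] using (congrArg (·⁻¹) this).symm
    · rintro ⟨y, g, rfl⟩
      exact ⟨g, rfl⟩
  have e : X ≃ (orbitRel.Quotient G X) × G := by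
    refine (selfEquivSigmaOrbits G X).trans ?_
    refine (Equiv.sigmaCongrRight fun ω : orbitRel.Quotient G X => (horb ω.out).some).trans ?_
    exact Equiv.sigmaEquivProd _ _
  rw [Nat.card_congr e, Nat.card_prod]

/-- The subgroup of permutations of a product preserving the second coordinate. -/
def sndPres (X Y : Type*) : Subgroup (Equiv.Perm (X × Y)) where
  carrier := {σ | ∀ p : X × Y, (σ p).2 = p.2}
  mul_mem' := by
    intro a b ha hb p
    simpa [Equiv.Perm.mul_apply, hb p] using ha (b p)
  one_mem' := by intro p; rfl
  inv_mem' := by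
    intro a ha p
    have := ha (a⁻¹ p)
    simpa using this.symm

lemma mem_sndPres {X Y : Type*} {σ : Equiv.Perm (X × Y)} :
    σ ∈ sndPres X Y ↔ ∀ p : X × Y, (σ p).2 = p.2 := Iff.rfl

/-- An element of the centralizer of `S` commutes pointwise with every element of
the closure of `S`. -/
lemma centralizer_apply_closure_comm {X : Type*} {S : Set (Equiv.Perm X)}
    {g : Equiv.Perm X} (hg : g ∈ Subgroup.centralizer S)
    {w : Equiv.Perm X} (hw : w ∈ Subgroup.closure S) (x : X) :
    g (w x) = w (g x) := by
  have h : w ∈ Subgroup.centralizer {g} := by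
    refine Subgroup.closure_le (Subgroup.centralizer {g}) |>.mpr ?_ hw
    intro s hs
    show s ∈ Subgroup.centralizer {g}
    rw [Subgroup.mem_centralizer_iff]
    rintro h rfl
    exact (Subgroup.mem_centralizer_iff.mp hg s hs).symm
  have := Subgroup.mem_centralizer_iff.mp h g rfl
  calc g (w x) = (g * w) x := rfl
  _ = (w * g) x := by rw [this]
  _ = w (g x) := rfl


/-- if M is a k-orbit map, then Tr(M) is a k-orbit, 3k-orbit, or
(for k even) 3k/2-orbit map. -/
theorem truncation_orbit_count
    {F : Type*} [Fintype F] [Nonempty F]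
    (s0 s1 s2 : Equiv.Perm F)
    (hs0i : s0 * s0 = 1) (hs0f : ∀ x, s0 x ≠ x)
    (hs1i : s1 * s1 = 1) (hs1f : ∀ x, s1 x ≠ x)
    (hs2i : s2 * s2 = 1) (hs2f : ∀ x, s2 x ≠ x)
    (hcomm : s0 * s2 = s2 * s0)
    (hs02i : (s0 * s2) * (s0 * s2) = 1) (hs02f : ∀ x, (s0 * s2) x ≠ x)
    (htrans : ∀ x y : F, ∃ g ∈ Subgroup.closure ({s0, s1, s2} : Set (Equiv.Perm F)), g x = y)
    (r0 r1 r2 : Equiv.Perm (F × Fin 3))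
    (hr0 : ∀ Φ : F, r0 (Φ, 0) = (s1 Φ, 0) ∧ r0 (Φ, 1) = (s0 Φ, 1) ∧ r0 (Φ, 2) = (s1 Φ, 2))
    (hr1 : ∀ Φ : F, r1 (Φ, 0) = (s2 Φ, 0) ∧ r1 (Φ, 1) = (Φ, 2) ∧ r1 (Φ, 2) = (Φ, 1))
    (hr2 : ∀ Φ : F, r2 (Φ, 0) = (Φ, 2) ∧ r2 (Φ, 1) = (s2 Φ, 1) ∧ r2 (Φ, 2) = (Φ, 0))
    (k : ℕ)
    (hk : Nat.card (MulAction.orbitRel.Quotient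
      (↥(Subgroup.centralizer ({s0, s1, s2} : Set (Equiv.Perm F)))) F) = k) :
    Nat.card (MulAction.orbitRel.Quotient
      (↥(Subgroup.centralizer ({r0, r1, r2} : Set (Equiv.Perm (F × Fin 3))))) (F × Fin 3)) = k ∨
    Nat.card (MulAction.orbitRel.Quotient
      (↥(Subgroup.centralizer ({r0, r1, r2} : Set (Equiv.Perm (F × Fin 3))))) (F × Fin 3)) = 3 * k ∨
    (Even k ∧ 2 * Nat.card (MulAction.orbitRel.Quotient
      (↥(Subgroup.centralizer ({r0, r1, r2} : Set (Equiv.Perm (F × Fin 3))))) (F × Fin 3)) = 3 * k) := by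
  classical
  set S : Set (Equiv.Perm F) := {s0, s1, s2} with hS
  set R : Set (Equiv.Perm (F × Fin 3)) := {r0, r1, r2} with hR
  have h3 : ∀ i : Fin 3, i = 0 ∨ i = 1 ∨ i = 2 := by decide
  have hr0R : r0 ∈ Subgroup.closure R := Subgroup.subset_closure (by simp [hR])
  have hr1R : r1 ∈ Subgroup.closure R := Subgroup.subset_closure (by simp [hR])
  have hr2R : r2 ∈ Subgroup.closure R := Subgroup.subset_closure (by simp [hR])
  -- type behaviour of the generators
  have ht0 : ∀ p : F × Fin 3, (r0 p).2 = p.2 := by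
    rintro ⟨Φ, i⟩
    rcases h3 i with rfl | rfl | rfl
    · rw [(hr0 Φ).1]
    · rw [(hr0 Φ).2.1]
    · rw [(hr0 Φ).2.2]
  have ht1 : ∀ p : F × Fin 3, (r1 p).2 = Equiv.swap (1 : Fin 3) 2 p.2 := by
    rintro ⟨Φ, i⟩
    rcases h3 i with rfl | rfl | rfl
    · rw [(hr1 Φ).1]; simp [Equiv.swap_apply_def]
    · rw [(hr1 Φ).2.1]; simp [Equiv.swap_apply_def]
    · rw [(hr1 Φ).2.2]; simp [Equiv.swap_apply_def]
  have ht2 : ∀ p : F × Fin 3, (r2 p).2 = Equiv.swap (0 : Fin 3) 2 p.2 := by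
    rintro ⟨Φ, i⟩
    rcases h3 i with rfl | rfl | rfl
    · rw [(hr2 Φ).1]; simp [Equiv.swap_apply_def]
    · rw [(hr2 Φ).2.1]; simp [Equiv.swap_apply_def]
    · rw [(hr2 Φ).2.2]; simp [Equiv.swap_apply_def]
  -- the word r2 r1 r0 r1 r2 realizes s0 on flags of type 0
  have hw5 : ∀ Φ : F, (r2 * r1 * r0 * r1 * r2) (Φ, (0 : Fin 3)) = (s0 Φ, 0) := by
    intro Φ
    show r2 (r1 (r0 (r1 (r2 (Φ, 0))))) = _
    rw [(hr2 Φ).1, (hr1 Φ).2.2, (hr0 Φ).2.1, (hr1 (s0 Φ)).2.1, (hr2 (s0 Φ)).2.2]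
  have hw5R : (r2 * r1 * r0 * r1 * r2) ∈ Subgroup.closure R :=
    mul_mem (mul_mem (mul_mem (mul_mem hr2R hr1R) hr0R) hr1R) hr2R
  -- lifting elements of the monodromy group of M to the truncation
  have hlift : ∀ g ∈ Subgroup.closure S, ∃ w ∈ Subgroup.closure R,
      ∀ Φ : F, w (Φ, (0 : Fin 3)) = (g Φ, 0) := by
    intro g hg
    induction hg using Subgroup.closure_induction with
    | mem s hs =>
        simp only [hS, Set.mem_insert_iff, Set.mem_singleton_iff] at hs
        rcases hs with h | h | h
        · -- s = s0, lifted by r2 * r1 * r0 * r1 * r2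
          rw [h]
          exact ⟨r2 * r1 * r0 * r1 * r2, mul_mem (mul_mem (mul_mem (mul_mem hr2R hr1R) hr0R) hr1R) hr2R, hw5⟩
        · rw [h]; exact ⟨r0, hr0R, fun Φ => (hr0 Φ).1⟩
        · rw [h]; exact ⟨r1, hr1R, fun Φ => (hr1 Φ).1⟩
    | one => exact ⟨1, one_mem _, fun Φ => rfl⟩
    | mul a b ha hb iha ihb =>
        obtain ⟨wa, hwa, ha'⟩ := iha
        obtain ⟨wb, hwb, hb'⟩ := ihb
        refine ⟨wa * wb, mul_mem hwa hwb, fun Φ => ?_⟩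
        calc (wa * wb) (Φ, (0:Fin 3)) = wa (wb (Φ, 0)) := rfl
        _ = wa (b Φ, 0) := by rw [hb' Φ]
        _ = (a (b Φ), 0) := ha' (b Φ)
        _ = ((a * b) Φ, 0) := rfl
    | inv a ha iha =>
        obtain ⟨w, hw, h⟩ := iha
        refine ⟨w⁻¹, inv_mem hw, fun Φ => ?_⟩
        have h2 : w (a⁻¹ Φ, (0:Fin 3)) = (Φ, 0) := by rw [h (a⁻¹ Φ)]; simp
        have := congrArg (fun z => w⁻¹ z) h2
        simpa using this.symm
  -- each flag can be moved to type 0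
  have hto0 : ∀ p : F × Fin 3, ∃ w ∈ Subgroup.closure R, w p = (p.1, (0 : Fin 3)) := by
    rintro ⟨Φ, i⟩
    rcases h3 i with rfl | rfl | rfl
    · exact ⟨1, one_mem _, rfl⟩
    · refine ⟨r2 * r1, mul_mem hr2R hr1R, ?_⟩
      show r2 (r1 (Φ, 1)) = (Φ, 0)
      rw [(hr1 Φ).2.1, (hr2 Φ).2.2]
    · exact ⟨r2, hr2R, (hr2 Φ).2.2⟩
  -- the monodromy group of the truncation is transitive
  have htransR : ∀ p q : F × Fin 3, ∃ w ∈ Subgroup.closure R, w p = q := by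
    intro p q
    obtain ⟨wp, hwp, hp⟩ := hto0 p
    obtain ⟨wq, hwq, hq⟩ := hto0 q
    obtain ⟨g, hg, hgpq⟩ := htrans p.1 q.1
    obtain ⟨w, hw, hwl⟩ := hlift g hg
    refine ⟨wq⁻¹ * (w * wp), mul_mem (inv_mem hwq) (mul_mem hw hwp), ?_⟩
    have : (wq⁻¹ * (w * wp)) p = wq⁻¹ (w (wp p)) := rfl
    rw [this, hp, hwl p.1, hgpq, ← hq]
    simp
  -- the key lemma: an automorphism preserving the type of one flag preserves all types
  have hKiff : ∀ g ∈ Subgroup.centralizer R, ∀ w ∈ Subgroup.closure R,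
      ∀ z : F × Fin 3, ((g (w z)).2 = (w z).2 ↔ (g z).2 = z.2) := by
    intro g hg w hw
    induction hw using Subgroup.closure_induction with
    | mem s hs =>
        intro z
        have hcz : g (s z) = s (g z) :=
          centralizer_apply_closure_comm hg (Subgroup.subset_closure hs) z
        simp only [hR, Set.mem_insert_iff, Set.mem_singleton_iff] at hs
        rcases hs with h | h | h <;> subst h
        · rw [hcz, ht0, ht0]
        · rw [hcz, ht1, ht1]; exact Equiv.apply_eq_iff_eq _
        · rw [hcz, ht2, ht2]; exact Equiv.apply_eq_iff_eq _
    | one => intro z; rfl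
    | mul a b ha hb iha ihb =>
        intro z
        have : (a * b) z = a (b z) := rfl
        rw [this]
        exact (iha (b z)).trans (ihb z)
    | inv a ha iha =>
        intro z
        have h2 := (iha (a⁻¹ z)).symm
        simpa using h2
  have hL : ∀ g ∈ Subgroup.centralizer R, ∀ x : F × Fin 3, (g x).2 = x.2 →
      g ∈ sndPres F (Fin 3) := by
    intro g hg x hx y
    obtain ⟨w, hw, hwxy⟩ := htransR x y
    rw [← hwxy]
    exact (hKiff g hg w hw x).mpr hx
  -- the subgroup of type-preserving automorphisms
  set K : Subgroup ↥(Subgroup.centralizer R) :=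
    (sndPres F (Fin 3)).subgroupOf (Subgroup.centralizer R) with hK
  obtain ⟨Φ0⟩ := ‹Nonempty F›
  -- the index of K is at most 3
  have hind3 : K.index ≤ 3 := by
    rw [Subgroup.index_eq_card]
    set f : ↥(Subgroup.centralizer R) → Fin 3 :=
      fun g => (((g : Equiv.Perm (F × Fin 3)))⁻¹ (Φ0, 0)).2 with hf
    have wd : ∀ a b : ↥(Subgroup.centralizer R),
        @Setoid.r _ (QuotientGroup.leftRel K) a b → f a = f b := by
      intro a b hab
      rw [QuotientGroup.leftRel_apply] at hab
      rw [hK, Subgroup.mem_subgroupOf] at hab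
      have huinv : ((↑(a⁻¹ * b) : Equiv.Perm (F × Fin 3)))⁻¹ ∈ sndPres F (Fin 3) :=
        (sndPres F (Fin 3)).inv_mem hab
      have hb : ((b : Equiv.Perm (F × Fin 3)))⁻¹ =
          ((↑(a⁻¹ * b) : Equiv.Perm (F × Fin 3)))⁻¹ * ((a : Equiv.Perm (F × Fin 3)))⁻¹ := by
        push_cast
        group
      have : f b = (((↑(a⁻¹ * b) : Equiv.Perm (F × Fin 3)))⁻¹
          (((a : Equiv.Perm (F × Fin 3)))⁻¹ (Φ0, 0))).2 := by
        rw [hf]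
        simp only []
        rw [hb]
        rfl
      rw [this, huinv _]
    set fbar : (↥(Subgroup.centralizer R) ⧸ K) → Fin 3 :=
      fun q => Quotient.liftOn' q f wd with hfbar
    have hinj : Function.Injective fbar := by
      intro q1 q2
      induction q1 using Quotient.inductionOn' with | h a =>
      induction q2 using Quotient.inductionOn' with | h b =>
      intro hab
      have hab' : f a = f b := hab
      apply Quotient.sound'
      rw [QuotientGroup.leftRel_apply, hK, Subgroup.mem_subgroupOf]
      have hmem : ((↑(a⁻¹ * b) : Equiv.Perm (F × Fin 3))) ∈ Subgroup.centralizer R :=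
        (a⁻¹ * b).2
      refine hL _ hmem (((b : Equiv.Perm (F × Fin 3)))⁻¹ (Φ0, 0)) ?_
      have h1 : (↑(a⁻¹ * b) : Equiv.Perm (F × Fin 3))
          (((b : Equiv.Perm (F × Fin 3)))⁻¹ (Φ0, 0)) =
          ((a : Equiv.Perm (F × Fin 3)))⁻¹ (Φ0, 0) := by
        push_cast
        simp [Equiv.Perm.mul_apply]
      rw [h1]
      exact hab'
    calc Nat.card (↥(Subgroup.centralizer R) ⧸ K) ≤ Nat.card (Fin 3) :=
          Nat.card_le_card_of_injective fbar hinj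
    _ = 3 := by simp
  -- pointwise commutation for elements of the centralizer of S
  have hsc : ∀ g ∈ Subgroup.centralizer S, (∀ Φ, g (s0 Φ) = s0 (g Φ)) ∧
      (∀ Φ, g (s1 Φ) = s1 (g Φ)) ∧ (∀ Φ, g (s2 Φ) = s2 (g Φ)) := by
    intro g hg
    refine ⟨fun Φ => ?_, fun Φ => ?_, fun Φ => ?_⟩ <;>
      exact centralizer_apply_closure_comm hg
        (Subgroup.subset_closure (by simp [hS])) Φ
  -- K is isomorphic to the automorphism group of M
  have hKA : Nat.card ↥(Subgroup.centralizer S) = Nat.card ↥K := by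
    have hmemG : ∀ γ : ↥(Subgroup.centralizer S),
        Equiv.prodCongr (γ : Equiv.Perm F) (Equiv.refl (Fin 3)) ∈ Subgroup.centralizer R := by
      intro γ
      obtain ⟨c0, c1, c2⟩ := hsc _ γ.2
      rw [Subgroup.mem_centralizer_iff]
      intro h hh
      simp only [hR, Set.mem_insert_iff, Set.mem_singleton_iff] at hh
      rcases hh with rfl | rfl | rfl <;>
      · apply Equiv.ext
        rintro ⟨Φ, i⟩
        rcases h3 i with rfl | rfl | rfl <;>
          simp only [Equiv.Perm.mul_apply, Equiv.prodCongr_apply, Equiv.coe_refl,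
            Prod.map_apply, id_eq, (hr0 Φ).1, (hr0 Φ).2.1, (hr0 Φ).2.2,
            (hr1 Φ).1, (hr1 Φ).2.1, (hr1 Φ).2.2,
            (hr2 Φ).1, (hr2 Φ).2.1, (hr2 Φ).2.2] <;>
          simp only [(hr0 ((γ : Equiv.Perm F) Φ)).1, (hr0 ((γ : Equiv.Perm F) Φ)).2.1,
            (hr0 ((γ : Equiv.Perm F) Φ)).2.2,
            (hr1 ((γ : Equiv.Perm F) Φ)).1, (hr1 ((γ : Equiv.Perm F) Φ)).2.1,
            (hr1 ((γ : Equiv.Perm F) Φ)).2.2,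
            (hr2 ((γ : Equiv.Perm F) Φ)).1, (hr2 ((γ : Equiv.Perm F) Φ)).2.1,
            (hr2 ((γ : Equiv.Perm F) Φ)).2.2, Prod.map_apply, id_eq,
            c0 Φ, c1 Φ, c2 Φ]
    set j : ↥(Subgroup.centralizer S) → ↥K := fun γ =>
      ⟨⟨Equiv.prodCongr (γ : Equiv.Perm F) (Equiv.refl (Fin 3)), hmemG γ⟩, by
        rw [hK, Subgroup.mem_subgroupOf]
        intro p
        simp⟩ with hj
    apply Nat.card_eq_of_bijective j
    constructor
    · intro γ γ' hγ
      apply Subtype.ext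
      apply Equiv.ext
      intro Φ
      have := congrArg (fun t : ↥K => (((t : ↥(Subgroup.centralizer R)) :
        Equiv.Perm (F × Fin 3)) (Φ, (0 : Fin 3))).1) hγ
      simpa [hj] using this
    · rintro ⟨⟨g, hgG⟩, hgK⟩
      rw [hK, Subgroup.mem_subgroupOf] at hgK
      have hgT : ∀ p : F × Fin 3, (g p).2 = p.2 := hgK
      have hg0 : ∀ Φ : F, g (Φ, (0 : Fin 3)) = ((g (Φ, 0)).1, 0) := by
        intro Φ
        exact Prod.ext_iff.mpr ⟨rfl, hgT (Φ, 0)⟩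
      have hginv0 : ∀ Φ : F, g⁻¹ (Φ, (0 : Fin 3)) = ((g⁻¹ (Φ, 0)).1, 0) := by
        intro Φ
        refine Prod.ext_iff.mpr ⟨rfl, ?_⟩
        have := hgT (g⁻¹ (Φ, 0))
        simpa using this.symm
      set γ : Equiv.Perm F :=
        { toFun := fun Φ => (g (Φ, 0)).1
          invFun := fun Φ => (g⁻¹ (Φ, 0)).1
          left_inv := by
            intro Φ
            show (g⁻¹ ((g (Φ, 0)).1, 0)).1 = Φ
            rw [← hg0 Φ]
            simp
          right_inv := by
            intro Φ
            show (g ((g⁻¹ (Φ, 0)).1, 0)).1 = Φ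
            rw [← hginv0 Φ]
            simp } with hγdef
      have hγ0 : ∀ Φ : F, g (Φ, (0 : Fin 3)) = (γ Φ, 0) := hg0
      have hγ2 : ∀ Φ : F, g (Φ, (2 : Fin 3)) = (γ Φ, 2) := by
        intro Φ
        have h1 : ((Φ, (2 : Fin 3)) : F × Fin 3) = r2 (Φ, 0) := ((hr2 Φ).1).symm
        rw [h1, centralizer_apply_closure_comm hgG hr2R, hγ0 Φ, (hr2 (γ Φ)).1]
      have hγ1 : ∀ Φ : F, g (Φ, (1 : Fin 3)) = (γ Φ, 1) := by
        intro Φ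
        have h1 : ((Φ, (1 : Fin 3)) : F × Fin 3) = r1 (Φ, 2) := ((hr1 Φ).2.2).symm
        rw [h1, centralizer_apply_closure_comm hgG hr1R, hγ2 Φ, (hr1 (γ Φ)).2.2]
      have hγS : γ ∈ Subgroup.centralizer S := by
        rw [Subgroup.mem_centralizer_iff]
        intro h hh
        simp only [hS, Set.mem_insert_iff, Set.mem_singleton_iff] at hh
        have key : ∀ (w : Equiv.Perm (F × Fin 3)) (t : Equiv.Perm F),
            w ∈ Subgroup.closure R → (∀ Ψ, w (Ψ, (0 : Fin 3)) = (t Ψ, 0)) →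
            ∀ Φ, t (γ Φ) = γ (t Φ) := by
          intro w t hwR hwt Φ
          have h1 : g (w (Φ, (0 : Fin 3))) = w (g (Φ, 0)) :=
            centralizer_apply_closure_comm hgG hwR (Φ, 0)
          rw [hwt Φ, hγ0 Φ, hwt (γ Φ), hγ0 (t Φ)] at h1
          exact (congrArg Prod.fst h1).symm
        rcases hh with rfl | rfl | rfl
        · apply Equiv.ext
          intro Φ
          exact key _ _ hw5R hw5 Φ
        · apply Equiv.ext
          intro Φ
          exact key _ _ hr0R (fun Ψ => (hr0 Ψ).1) Φ
        · apply Equiv.ext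
          intro Φ
          exact key _ _ hr1R (fun Ψ => (hr1 Ψ).1) Φ
      refine ⟨⟨γ, hγS⟩, ?_⟩
      apply Subtype.ext
      apply Subtype.ext
      show Equiv.prodCongr γ (Equiv.refl (Fin 3)) = g
      apply Equiv.ext
      rintro ⟨Φ, i⟩
      rcases h3 i with rfl | rfl | rfl
      · exact (hγ0 Φ).symm
      · exact (hγ1 Φ).symm
      · exact (hγ2 Φ).symm
  -- both automorphism groups act freely
  have hfreeS : ∀ (γ : ↥(Subgroup.centralizer S)) (Φ : F), γ • Φ = Φ → γ = 1 := by
    intro γ Φ h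
    have h' : (γ : Equiv.Perm F) Φ = Φ := h
    have hall : ∀ Ψ, (γ : Equiv.Perm F) Ψ = Ψ := by
      intro Ψ
      obtain ⟨w, hw, hwΨ⟩ := htrans Φ Ψ
      rw [← hwΨ, centralizer_apply_closure_comm γ.2 hw, h']
    exact Subtype.ext (Equiv.ext hall)
  have hfreeR : ∀ (g : ↥(Subgroup.centralizer R)) (p : F × Fin 3), g • p = p → g = 1 := by
    intro g p h
    have h' : (g : Equiv.Perm (F × Fin 3)) p = p := h
    have hall : ∀ q, (g : Equiv.Perm (F × Fin 3)) q = q := by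
      intro q
      obtain ⟨w, hw, hwq⟩ := htransR p q
      rw [← hwq, centralizer_apply_closure_comm g.2 hw, h']
    exact Subtype.ext (Equiv.ext hall)
  have hc1 := free_action_card_orbits_mul hfreeS
  have hc2 := free_action_card_orbits_mul hfreeR
  rw [hk] at hc1
  have hGKm : K.index * Nat.card ↥K = Nat.card ↥(Subgroup.centralizer R) :=
    Subgroup.index_mul_card K
  have hind0 : K.index ≠ 0 := Subgroup.index_ne_zero_of_finite
  have hapos : 0 < Nat.card ↥(Subgroup.centralizer S) := Nat.card_pos
  have hcF3 : Nat.card (F × Fin 3) = 3 * Nat.card F := by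
    rw [Nat.card_prod]
    simp [Nat.card_eq_fintype_card, mul_comm]
  set n := Nat.card (orbitRel.Quotient (↥(Subgroup.centralizer R)) (F × Fin 3)) with hn
  have key : n * K.index = 3 * k := by
    apply Nat.eq_of_mul_eq_mul_right hapos
    calc n * K.index * Nat.card ↥(Subgroup.centralizer S)
        = n * (K.index * Nat.card ↥K) := by rw [hKA]; ring
      _ = n * Nat.card ↥(Subgroup.centralizer R) := by rw [hGKm]
      _ = Nat.card (F × Fin 3) := hc2
      _ = 3 * Nat.card F := hcF3
      _ = 3 * (k * Nat.card ↥(Subgroup.centralizer S)) := by rw [hc1]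
      _ = 3 * k * Nat.card ↥(Subgroup.centralizer S) := by ring
  have hm : K.index = 1 ∨ K.index = 2 ∨ K.index = 3 := by omega
  rcases hm with hm | hm | hm
  · right; left
    rw [hm] at key
    omega
  · right; right
    rw [hm] at key
    constructor
    · rw [Nat.even_iff]
      omega
    · omega
  · left
    rw [hm] at key
    omega
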